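/- Main monotonic improvement bound, exponential branch (Theorem 4, Bretagnolle–Huber branch): Let π_K and π_{K+1} be policies of a finite MDP with π_K(s,a) > 0 for all s, a, and suppose there is C > 0 with max_{s∈S} D_KL(π_{K+1}(s,·) ‖ π_K(s,·)) ≤ 2C. Let A = A^{π_{K+1}}_{π_K, d^{π_K}}, assume A ≥ 0, set ζ = (1−γ)³·A / (8γ·(1 − exp(−2C))), assume ζ ≤ 1, and define π̃(s,a) = ζ·π_{K+1}(s,a) + (1−ζ)·π_K(s,a). Then J^{π̃} − J^{π_K} ≥ (1−γ)³·A² / (16γ·(1 − exp(−2C))). -/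

import Mathlib

open Finset

/-- A finite Markov decision process with bounded rewards and discount `γ ∈ (0,1)`. -/
structure FiniteMDP (S A : Type) [Fintype S] [Fintype A] : Type where
  P : S → A → S → ℝ
  r : S → A → ℝ
  γ : ℝ
  s0 : S
  P_nonneg : ∀ s a s', 0 ≤ P s a s'
  P_sum_one : ∀ s a, ∑ s', P s a s' = 1
  r_bound : ∀ s a, |r s a| ≤ 1
  γ_pos : 0 < γ
  γ_lt_one : γ < 1

variable {S A : Type} [Fintype S] [Fintype A] [DecidableEq S]

/-- `π` is a (stochastic) policy. -/
def IsPolicy (π : S → A → ℝ) : Prop :=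
  (∀ s a, 0 ≤ π s a) ∧ ∀ s, ∑ a, π s a = 1

/-- `Q` satisfies the Bellman equation of policy `π`. -/
def IsQ (M : FiniteMDP S A) (π Q : S → A → ℝ) : Prop :=
  ∀ s a, Q s a = M.r s a + M.γ * ∑ s', M.P s a s' * ∑ a', π s' a' * Q s' a'

/-- `d` is the discounted state (occupancy) distribution of policy `π`. -/
def IsD (M : FiniteMDP S A) (π : S → A → ℝ) (d : S → ℝ) : Prop :=
  ∀ s', d s' = (1 - M.γ) * (if s' = M.s0 then (1 : ℝ) else 0)
      + M.γ * ∑ s, d s * ∑ a, π s a * M.P s a s'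

/-- The normalized return `J^π = ∑_s d^π(s) ∑_a π(s,a) r(s,a)`. -/
def Jret (M : FiniteMDP S A) (π : S → A → ℝ) (d : S → ℝ) : ℝ :=
  ∑ s, d s * ∑ a, π s a * M.r s a

/-- The policy advantage function `A^{π'}_π(s) = ∑_a (π'(s,a) − π(s,a)) Q_π(s,a)`. -/
def polAdv (π' π Q : S → A → ℝ) (s : S) : ℝ :=
  ∑ a, (π' s a - π s a) * Q s a

/-- The expected policy advantage `A^{π'}_{π,d}`. -/
def expPolAdv (π' π Q : S → A → ℝ) (d : S → ℝ) : ℝ :=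
  ∑ s, d s * polAdv π' π Q s

/-- `δ(π',π) = max_s ∑_a |π'(s,a) − π(s,a)|`. -/
noncomputable def polDist (π' π : S → A → ℝ) : ℝ :=
  ⨆ s : S, ∑ a, |π' s a - π s a|

/-- `ΔA^{π'}_π = max_{s,s'} |A^{π'}_π(s) − A^{π'}_π(s')|`. -/
noncomputable def advRange (π' π Q : S → A → ℝ) : ℝ :=
  ⨆ p : S × S, |polAdv π' π Q p.1 - polAdv π' π Q p.2|

/-- Kullback–Leibler divergence between probability vectors on a finite set. -/
noncomputable def KLdiv {B : Type} [Fintype B] (p q : B → ℝ) : ℝ :=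
  ∑ a ∈ Finset.univ.filter (fun a => 0 < p a), p a * Real.log (p a / q a)

lemma bretagnolle_huber {B : Type} [Fintype B] [Nonempty B] (p q : B → ℝ)
    (hp0 : ∀ a, 0 ≤ p a) (hp1 : ∑ a, p a = 1)
    (hq0 : ∀ a, 0 < q a) (hq1 : ∑ a, q a = 1) :
    (∑ a, |p a - q a|) ^ 2 ≤ 4 * (1 - Real.exp (-(KLdiv p q))) := by
  classical
  set T := Finset.univ.filter (fun a => 0 < p a) with hT
  set x := ∑ a, min (p a) (q a) with hx
  have hsummax : ∑ a, max (p a) (q a) = 2 - x := by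
    have h := Finset.sum_congr rfl (fun a (_ : a ∈ (Finset.univ : Finset B)) =>
      max_add_min (p a) (q a))
    rw [Finset.sum_add_distrib, Finset.sum_add_distrib, hp1, hq1] at h
    rw [hx]; linarith [h]
  have habs : ∑ a, |p a - q a| = 2 - 2 * x := by
    rw [Finset.sum_congr rfl (fun a (_ : a ∈ (Finset.univ : Finset B)) =>
      (max_sub_min_eq_abs (q a) (p a)).symm), Finset.sum_sub_distrib]
    simp only [max_comm, min_comm]
    rw [hsummax, ← hx]
    ring
  have hCS : (∑ a, Real.sqrt (p a * q a)) ^ 2 ≤ x * (2 - x) := by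
    rw [hx, ← hsummax]
    exact Finset.sum_sq_le_sum_mul_sum_of_sq_eq_mul _
      (fun a _ => le_min (hp0 a) (hq0 a).le)
      (fun a _ => le_trans (hp0 a) (le_max_left _ _))
      (fun a _ => by
        rw [Real.sq_sqrt (mul_nonneg (hp0 a) (hq0 a).le), min_mul_max])
  have hpsumT : ∑ a ∈ T, p a = 1 := by
    rw [← hp1]
    apply Finset.sum_subset (Finset.subset_univ T)
    intro a _ ha
    rw [hT, Finset.mem_filter] at ha
    push_neg at ha
    exact le_antisymm (ha (Finset.mem_univ a)) (hp0 a)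
  have hKL2 : -(KLdiv p q) / 2 = ∑ a ∈ T, p a * Real.log (Real.sqrt (q a / p a)) := by
    rw [KLdiv, ← hT, ← Finset.sum_neg_distrib, Finset.sum_div]
    apply Finset.sum_congr rfl
    intro a ha
    rw [hT, Finset.mem_filter] at ha
    rw [Real.log_sqrt (div_nonneg (hq0 a).le ha.2.le),
      Real.log_div (hq0 a).ne' ha.2.ne', Real.log_div ha.2.ne' (hq0 a).ne']
    ring
  have hTsum_eq : ∑ a ∈ T, p a * Real.sqrt (q a / p a) = ∑ a ∈ T, Real.sqrt (p a * q a) := by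
    apply Finset.sum_congr rfl
    intro a ha
    rw [hT, Finset.mem_filter] at ha
    have hsp : (0:ℝ) < Real.sqrt (p a) := Real.sqrt_pos.2 ha.2
    rw [Real.sqrt_div (hq0 a).le, Real.sqrt_mul (hp0 a)]
    field_simp
    nlinarith [Real.mul_self_sqrt (hp0 a), Real.sqrt_nonneg (q a)]
  have hTne : T.Nonempty := by
    apply Finset.nonempty_of_sum_ne_zero (f := fun a => p a)
    rw [hpsumT]; norm_num
  have hTpos : 0 < ∑ a ∈ T, Real.sqrt (p a * q a) := by
    obtain ⟨a, ha⟩ := hTne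
    have hpa : 0 < p a := by rw [hT, Finset.mem_filter] at ha; exact ha.2
    exact Finset.sum_pos' (fun b _ => Real.sqrt_nonneg _)
      ⟨a, ha, Real.sqrt_pos.2 (mul_pos hpa (hq0 a))⟩
  have hjensen : -(KLdiv p q) / 2 ≤ Real.log (∑ a ∈ T, Real.sqrt (p a * q a)) := by
    have h := (strictConcaveOn_log_Ioi.concaveOn).le_map_sum
      (t := T) (w := fun a => p a) (p := fun a => Real.sqrt (q a / p a))
      (fun a ha => by rw [hT, Finset.mem_filter] at ha; exact ha.2.le)
      hpsumT
      (fun a ha => by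
        rw [hT, Finset.mem_filter] at ha
        exact Real.sqrt_pos.2 (div_pos (hq0 a) ha.2))
    simp only [smul_eq_mul] at h
    rw [hKL2, ← hTsum_eq]
    exact h
  have hexp : Real.exp (-(KLdiv p q)) ≤ x * (2 - x) := by
    have h1 : Real.exp (-(KLdiv p q) / 2) ≤ ∑ a ∈ T, Real.sqrt (p a * q a) := by
      calc Real.exp (-(KLdiv p q) / 2) ≤ Real.exp (Real.log (∑ a ∈ T, Real.sqrt (p a * q a))) :=
            Real.exp_le_exp.2 hjensen
        _ = _ := Real.exp_log hTpos
    have h2 : ∑ a ∈ T, Real.sqrt (p a * q a) ≤ ∑ a, Real.sqrt (p a * q a) :=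
      Finset.sum_le_sum_of_subset_of_nonneg (Finset.subset_univ T)
        (fun a _ _ => Real.sqrt_nonneg _)
    have h3 : Real.exp (-(KLdiv p q)) = Real.exp (-(KLdiv p q) / 2) ^ 2 := by
      rw [← Real.exp_nat_mul]; congr 1; push_cast; ring
    rw [h3]
    calc Real.exp (-(KLdiv p q) / 2) ^ 2 ≤ (∑ a, Real.sqrt (p a * q a)) ^ 2 := by
          apply pow_le_pow_left₀ (Real.exp_nonneg _) (h1.trans h2)
      _ ≤ x * (2 - x) := hCS
  rw [habs]
  nlinarith [hexp]

-- sum of occupancy is 1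
lemma d_sum_one (M : FiniteMDP S A) (π : S → A → ℝ) (d : S → ℝ)
    (hπ : IsPolicy π) (hd : IsD M π d) : ∑ s, d s = 1 := by
  have h : ∑ s', d s' = (1 - M.γ) + M.γ * ∑ s, d s := by
    calc ∑ s', d s'
        = ∑ s', ((1 - M.γ) * (if s' = M.s0 then (1:ℝ) else 0)
            + M.γ * ∑ s, d s * ∑ a, π s a * M.P s a s') :=
          Finset.sum_congr rfl fun s' _ => hd s'
      _ = (1 - M.γ) * ∑ s', (if s' = M.s0 then (1:ℝ) else 0)
            + M.γ * ∑ s', ∑ s, d s * ∑ a, π s a * M.P s a s' := by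
          rw [Finset.sum_add_distrib, Finset.mul_sum, Finset.mul_sum]
      _ = (1 - M.γ) + M.γ * ∑ s, d s := by
          rw [Finset.sum_ite_eq' Finset.univ M.s0 (fun _ => (1:ℝ))]
          simp only [Finset.mem_univ, if_true, mul_one]
          congr 1
          rw [Finset.sum_comm]
          congr 1
          apply Finset.sum_congr rfl
          intro s _
          calc ∑ s', d s * ∑ a, π s a * M.P s a s'
              = d s * ∑ s', ∑ a, π s a * M.P s a s' := by rw [Finset.mul_sum]
            _ = d s * ∑ a, ∑ s', π s a * M.P s a s' := by rw [Finset.sum_comm]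
            _ = d s * ∑ a, π s a * ∑ s', M.P s a s' := by
                congr 1
                exact Finset.sum_congr rfl fun a _ => (Finset.mul_sum _ _ _).symm
            _ = d s := by simp only [M.P_sum_one, mul_one, hπ.2 s]
  have hγ : M.γ < 1 := M.γ_lt_one
  nlinarith [h]

-- occupancy is nonnegative
lemma d_nonneg (M : FiniteMDP S A) (π : S → A → ℝ) (d : S → ℝ)
    (hπ : IsPolicy π) (hd : IsD M π d) : ∀ s, 0 ≤ d s := by
  classical
  set μ : S → S → ℝ := fun s s' => ∑ a, π s a * M.P s a s' with hμ
  have hμ0 : ∀ s s', 0 ≤ μ s s' := fun s s' =>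
    Finset.sum_nonneg fun a _ => mul_nonneg (hπ.1 s a) (M.P_nonneg s a s')
  have hμ1 : ∀ s, ∑ s', μ s s' = 1 := by
    intro s
    rw [hμ]
    simp only
    rw [Finset.sum_comm]
    calc ∑ a, ∑ s', π s a * M.P s a s' = ∑ a, π s a * ∑ s', M.P s a s' := by
          apply Finset.sum_congr rfl; intro a _; rw [Finset.mul_sum]
      _ = 1 := by simp only [M.P_sum_one, mul_one]; exact hπ.2 s
  -- iterated vector
  let f : ℕ → S → ℝ := fun n => Nat.rec d (fun _ g s' => ∑ s, g s * μ s s') n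
  have hf0 : f 0 = d := rfl
  have hfsucc : ∀ n s', f (n+1) s' = ∑ s, f n s * μ s s' := fun n s' => rfl
  set B := ∑ s, |d s| with hB
  have hBnn : 0 ≤ B := Finset.sum_nonneg fun s _ => abs_nonneg _
  have hfabs : ∀ n, ∑ s', |f n s'| ≤ B := by
    intro n
    induction n with
    | zero => rw [hf0]
    | succ n ih =>
        calc ∑ s', |f (n+1) s'| ≤ ∑ s', ∑ s, |f n s| * μ s s' := by
              apply Finset.sum_le_sum
              intro s' _
              rw [hfsucc]
              refine (Finset.abs_sum_le_sum_abs _ _).trans ?_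
              apply Finset.sum_le_sum
              intro s _
              rw [abs_mul, abs_of_nonneg (hμ0 s s')]
          _ = ∑ s, |f n s| := by
              rw [Finset.sum_comm]
              apply Finset.sum_congr rfl
              intro s _
              rw [← Finset.mul_sum, hμ1 s, mul_one]
          _ ≤ B := ih
  have hkey : ∀ n s', M.γ ^ n * f n s' ≤ d s' := by
    intro n
    induction n with
    | zero => intro s'; rw [hf0]; simp
    | succ n ih =>
        intro s'
        have h1 : M.γ ^ (n+1) * f (n+1) s' = M.γ * ∑ s, (M.γ ^ n * f n s) * μ s s' := by
          rw [hfsucc, Finset.mul_sum, Finset.mul_sum]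
          apply Finset.sum_congr rfl
          intro s _; ring
        rw [hd s', h1]
        have h2 : ∑ s, (M.γ ^ n * f n s) * μ s s' ≤ ∑ s, d s * μ s s' := by
          apply Finset.sum_le_sum
          intro s _
          exact mul_le_mul_of_nonneg_right (ih s) (hμ0 s s')
        have h3 : (0:ℝ) ≤ (1 - M.γ) * (if s' = M.s0 then (1:ℝ) else 0) := by
          apply mul_nonneg (by linarith [M.γ_lt_one])
          split <;> norm_num
        nlinarith [M.γ_pos]
  intro s'
  by_contra hcon
  push_neg at hcon
  obtain ⟨n, hn⟩ := exists_pow_lt_of_lt_one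
    (show (0:ℝ) < -d s' / (B + 1) from div_pos (by linarith) (by linarith)) M.γ_lt_one
  have hfn : -B ≤ f n s' := by
    have h1 : |f n s'| ≤ B := by
      refine le_trans ?_ (hfabs n)
      exact Finset.single_le_sum (f := fun s => |f n s|) (fun s _ => abs_nonneg _) (Finset.mem_univ s')
    linarith [abs_le.1 h1]
  have h2 : M.γ ^ n * f n s' ≤ d s' := hkey n s'
  have hγn : 0 < M.γ ^ n := pow_pos M.γ_pos n
  have h3 : M.γ ^ n * (B + 1) < -d s' :=
    (lt_div_iff₀ (by linarith : (0:ℝ) < B + 1)).1 hn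
  nlinarith

-- Q values are bounded by 1/(1-γ)
lemma q_bound (M : FiniteMDP S A) (π Q : S → A → ℝ) [Nonempty S] [Nonempty A]
    (hπ : IsPolicy π) (hQ : IsQ M π Q) : ∀ s a, |Q s a| ≤ 1 / (1 - M.γ) := by
  obtain ⟨⟨sm, am⟩, hm⟩ := Finite.exists_max (fun p : S × A => |Q p.1 p.2|)
  have hB : ∀ s a, |Q s a| ≤ |Q sm am| := fun s a => hm (s, a)
  have hγ1 : (0:ℝ) < 1 - M.γ := by linarith [M.γ_lt_one]
  have hstep : |Q sm am| ≤ 1 + M.γ * |Q sm am| := by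
    conv_lhs => rw [hQ sm am]
    calc |M.r sm am + M.γ * ∑ s', M.P sm am s' * ∑ a', π s' a' * Q s' a'|
        ≤ |M.r sm am| + M.γ * |∑ s', M.P sm am s' * ∑ a', π s' a' * Q s' a'| := by
          refine (abs_add_le _ _).trans ?_
          rw [abs_mul, abs_of_nonneg M.γ_pos.le]
      _ ≤ 1 + M.γ * |Q sm am| := by
          have h1 : |∑ s', M.P sm am s' * ∑ a', π s' a' * Q s' a'| ≤ |Q sm am| := by
            refine (Finset.abs_sum_le_sum_abs _ _).trans ?_
            calc ∑ s', |M.P sm am s' * ∑ a', π s' a' * Q s' a'|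
                ≤ ∑ s', M.P sm am s' * |Q sm am| := by
                  apply Finset.sum_le_sum
                  intro s' _
                  rw [abs_mul, abs_of_nonneg (M.P_nonneg sm am s')]
                  apply mul_le_mul_of_nonneg_left _ (M.P_nonneg sm am s')
                  refine (Finset.abs_sum_le_sum_abs _ _).trans ?_
                  calc ∑ a', |π s' a' * Q s' a'| ≤ ∑ a', π s' a' * |Q sm am| := by
                        apply Finset.sum_le_sum
                        intro a' _
                        rw [abs_mul, abs_of_nonneg (hπ.1 s' a')]
                        exact mul_le_mul_of_nonneg_left (hB s' a') (hπ.1 s' a')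
                    _ = |Q sm am| := by rw [← Finset.sum_mul, hπ.2 s', one_mul]
              _ = |Q sm am| := by rw [← Finset.sum_mul, M.P_sum_one, one_mul]
          nlinarith [M.γ_pos, h1, abs_nonneg (Q sm am), M.r_bound sm am]
  intro s a
  refine (hB s a).trans ?_
  rw [le_div_iff₀ hγ1]
  nlinarith [hstep]

-- ℓ¹ distance between occupancy measures
lemma d_l1 (M : FiniteMDP S A) (π₁ π₂ : S → A → ℝ) (d₁ d₂ : S → ℝ) (ε : ℝ)
    (hπ₁ : IsPolicy π₁) (hπ₂ : IsPolicy π₂)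
    (hd₁ : IsD M π₁ d₁) (hd₂ : IsD M π₂ d₂)
    (hε : ∀ s, ∑ a, |π₁ s a - π₂ s a| ≤ ε) :
    ∑ s', |d₁ s' - d₂ s'| ≤ M.γ / (1 - M.γ) * ε := by
  classical
  have hγ1 : (0:ℝ) < 1 - M.γ := by linarith [M.γ_lt_one]
  have hd₂nn := d_nonneg M π₂ d₂ hπ₂ hd₂
  have hd₂1 := d_sum_one M π₂ d₂ hπ₂ hd₂
  set ν : S → S → ℝ := fun s s' => ∑ a, |π₁ s a - π₂ s a| * M.P s a s' with hν
  set μ : S → S → ℝ := fun s s' => ∑ a, π₁ s a * M.P s a s' with hμ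
  have hμ0 : ∀ s s', 0 ≤ μ s s' := fun s s' =>
    Finset.sum_nonneg fun a _ => mul_nonneg (hπ₁.1 s a) (M.P_nonneg s a s')
  have hμ1 : ∀ s, ∑ s', μ s s' = 1 := by
    intro s
    rw [hμ]
    simp only
    rw [Finset.sum_comm]
    calc ∑ a, ∑ s', π₁ s a * M.P s a s' = ∑ a, π₁ s a * ∑ s', M.P s a s' := by
          apply Finset.sum_congr rfl; intro a _; rw [Finset.mul_sum]
      _ = 1 := by simp only [M.P_sum_one, mul_one]; exact hπ₁.2 s
  have hν1 : ∀ s, ∑ s', ν s s' ≤ ε := by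
    intro s
    rw [hν]
    simp only
    rw [Finset.sum_comm]
    calc ∑ a, ∑ s', |π₁ s a - π₂ s a| * M.P s a s'
        = ∑ a, |π₁ s a - π₂ s a| * ∑ s', M.P s a s' := by
          apply Finset.sum_congr rfl; intro a _; rw [Finset.mul_sum]
      _ = ∑ a, |π₁ s a - π₂ s a| := by simp only [M.P_sum_one, mul_one]
      _ ≤ ε := hε s
  set μ₂ : S → S → ℝ := fun s s' => ∑ a, π₂ s a * M.P s a s' with hμ₂
  have hμdiff : ∀ s s', |μ s s' - μ₂ s s'| ≤ ν s s' := by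
    intro s s'
    rw [hμ, hμ₂, hν]
    simp only
    rw [← Finset.sum_sub_distrib]
    refine (Finset.abs_sum_le_sum_abs _ _).trans ?_
    apply Finset.sum_le_sum
    intro a _
    rw [← sub_mul, abs_mul, abs_of_nonneg (M.P_nonneg s a s')]
  have hptw : ∀ s', |d₁ s' - d₂ s'| ≤
      M.γ * (∑ s, |d₁ s - d₂ s| * μ s s') + M.γ * (∑ s, d₂ s * ν s s') := by
    intro s'
    have hdiff : d₁ s' - d₂ s' =
        M.γ * (∑ s, (d₁ s - d₂ s) * μ s s') + M.γ * (∑ s, d₂ s * (μ s s' - μ₂ s s')) := by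
      rw [hd₁ s', hd₂ s']
      rw [← mul_add, ← Finset.sum_add_distrib]
      have : ∀ s, (d₁ s - d₂ s) * μ s s' + d₂ s * (μ s s' - μ₂ s s')
          = d₁ s * μ s s' - d₂ s * μ₂ s s' := fun s => by ring
      rw [Finset.sum_congr rfl fun s _ => this s, Finset.sum_sub_distrib]
      ring
    rw [hdiff]
    refine (abs_add_le _ _).trans ?_
    rw [abs_mul, abs_mul, abs_of_nonneg M.γ_pos.le]
    apply add_le_add
    · apply mul_le_mul_of_nonneg_left _ M.γ_pos.le
      refine (Finset.abs_sum_le_sum_abs _ _).trans ?_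
      apply Finset.sum_le_sum
      intro s _
      rw [abs_mul, abs_of_nonneg (hμ0 s s')]
    · apply mul_le_mul_of_nonneg_left _ M.γ_pos.le
      refine (Finset.abs_sum_le_sum_abs _ _).trans ?_
      apply Finset.sum_le_sum
      intro s _
      rw [abs_mul, abs_of_nonneg (hd₂nn s)]
      exact mul_le_mul_of_nonneg_left (hμdiff s s') (hd₂nn s)
  set L := ∑ s', |d₁ s' - d₂ s'| with hL
  have hLle : L ≤ M.γ * L + M.γ * ε := by
    calc L ≤ ∑ s', (M.γ * (∑ s, |d₁ s - d₂ s| * μ s s') + M.γ * (∑ s, d₂ s * ν s s')) :=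
          Finset.sum_le_sum fun s' _ => hptw s'
      _ = M.γ * (∑ s', ∑ s, |d₁ s - d₂ s| * μ s s')
          + M.γ * (∑ s', ∑ s, d₂ s * ν s s') := by
          rw [Finset.sum_add_distrib, Finset.mul_sum, Finset.mul_sum]
      _ ≤ M.γ * L + M.γ * ε := by
          apply add_le_add
          · apply mul_le_mul_of_nonneg_left _ M.γ_pos.le
            rw [Finset.sum_comm, hL]
            apply le_of_eq
            apply Finset.sum_congr rfl
            intro s _
            rw [← Finset.mul_sum, hμ1 s, mul_one]
          · apply mul_le_mul_of_nonneg_left _ M.γ_pos.le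
            rw [Finset.sum_comm]
            calc ∑ s, ∑ s', d₂ s * ν s s' = ∑ s, d₂ s * ∑ s', ν s s' := by
                  apply Finset.sum_congr rfl; intro s _; rw [Finset.mul_sum]
              _ ≤ ∑ s, d₂ s * ε := by
                  apply Finset.sum_le_sum
                  intro s _
                  exact mul_le_mul_of_nonneg_left (hν1 s) (hd₂nn s)
              _ = ε := by rw [← Finset.sum_mul, hd₂1, one_mul]
  rw [div_mul_eq_mul_div, le_div_iff₀ hγ1]
  nlinarith [hLle]

-- performance difference lemma (algebraic form)
lemma pdl (M : FiniteMDP S A) (π πb Q : S → A → ℝ) (d : S → ℝ)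
    (hQ : IsQ M πb Q) (hd : IsD M π d) :
    Jret M π d = expPolAdv π πb Q d + (1 - M.γ) * ∑ a', πb M.s0 a' * Q M.s0 a' := by
  classical
  set V : S → ℝ := fun s => ∑ a', πb s a' * Q s a' with hV
  have hr : ∀ s a, M.r s a = Q s a - M.γ * ∑ s', M.P s a s' * V s' := by
    intro s a
    rw [hQ s a, hV]
    ring
  have key : ∑ s, d s * ∑ a, π s a * ∑ s', M.P s a s' * V s'
      = ∑ s', (∑ s, d s * ∑ a, π s a * M.P s a s') * V s' := by
    have lhs : ∑ s, d s * ∑ a, π s a * ∑ s', M.P s a s' * V s'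
        = ∑ s, ∑ a, ∑ s', d s * (π s a * (M.P s a s' * V s')) := by
      simp only [Finset.mul_sum]
    have rhs : ∑ s', (∑ s, d s * ∑ a, π s a * M.P s a s') * V s'
        = ∑ s', ∑ s, ∑ a, d s * (π s a * M.P s a s') * V s' := by
      simp only [Finset.sum_mul, Finset.mul_sum]
    rw [lhs, rhs]
    conv_rhs => rw [Finset.sum_comm]
    apply Finset.sum_congr rfl
    intro s _
    rw [Finset.sum_comm]
    exact Finset.sum_congr rfl fun s' _ => Finset.sum_congr rfl fun a _ => by ring
  have hdγ : ∀ s', M.γ * ∑ s, d s * ∑ a, π s a * M.P s a s'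
      = d s' - (1 - M.γ) * (if s' = M.s0 then (1:ℝ) else 0) := by
    intro s'
    have := hd s'
    linarith [this]
  have hsplit : Jret M π d = (∑ s, d s * ∑ a, π s a * Q s a)
      - M.γ * ∑ s, d s * ∑ a, π s a * ∑ s', M.P s a s' * V s' := by
    rw [Jret, Finset.mul_sum, ← Finset.sum_sub_distrib]
    apply Finset.sum_congr rfl
    intro s _
    calc d s * ∑ a, π s a * M.r s a
        = d s * ∑ a, (π s a * Q s a - M.γ * (π s a * ∑ s', M.P s a s' * V s')) := by
          congr 1
          apply Finset.sum_congr rfl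
          intro a _
          rw [hr s a]
          ring
      _ = d s * ∑ a, π s a * Q s a - M.γ * (d s * ∑ a, π s a * ∑ s', M.P s a s' * V s') := by
          rw [Finset.sum_sub_distrib, ← Finset.mul_sum]
          ring
  have hsecond : M.γ * ∑ s, d s * ∑ a, π s a * ∑ s', M.P s a s' * V s'
      = (∑ s, d s * V s) - (1 - M.γ) * V M.s0 := by
    rw [key, Finset.mul_sum]
    calc ∑ s', M.γ * ((∑ s, d s * ∑ a, π s a * M.P s a s') * V s')
        = ∑ s', (d s' - (1 - M.γ) * (if s' = M.s0 then (1:ℝ) else 0)) * V s' := by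
          apply Finset.sum_congr rfl
          intro s' _
          rw [← mul_assoc, hdγ s']
      _ = (∑ s', d s' * V s') - (1 - M.γ) * ∑ s', (if s' = M.s0 then (1:ℝ) else 0) * V s' := by
          rw [Finset.mul_sum, ← Finset.sum_sub_distrib]
          apply Finset.sum_congr rfl
          intro s' _
          ring
      _ = (∑ s, d s * V s) - (1 - M.γ) * V M.s0 := by
          congr 1
          congr 1
          rw [Finset.sum_congr rfl fun s' (_ : s' ∈ Finset.univ) => (by
            split <;> simp_all : (if s' = M.s0 then (1:ℝ) else 0) * V s'
              = if s' = M.s0 then V s' else 0)]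
          rw [Finset.sum_ite_eq' Finset.univ M.s0 V, if_pos (Finset.mem_univ _)]
  rw [hsplit, hsecond, expPolAdv]
  have : ∀ s, d s * polAdv π πb Q s = d s * ∑ a, π s a * Q s a - d s * V s := by
    intro s
    rw [polAdv, hV]
    rw [Finset.sum_congr rfl fun a (_ : a ∈ Finset.univ) => (by ring :
      (π s a - πb s a) * Q s a = π s a * Q s a - πb s a * Q s a)]
    rw [Finset.sum_sub_distrib]
    ring
  rw [Finset.sum_congr rfl fun s (_ : s ∈ Finset.univ) => this s, Finset.sum_sub_distrib]
  ring

set_option maxHeartbeats 1600000 in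
/-- **Main monotonic improvement bound, exponential branch** (Theorem 4,
Bretagnolle–Huber branch). -/
theorem cpp_monotonic_improvement_exponential
    {S A : Type} [Fintype S] [Fintype A] [DecidableEq S] [Nonempty S] [Nonempty A]
    (M : FiniteMDP S A) (πK1 πK Q : S → A → ℝ) (C ζ : ℝ) (πt : S → A → ℝ) (dt d : S → ℝ)
    (hπK1 : IsPolicy πK1) (hπK : IsPolicy πK) (hπKpos : ∀ s a, 0 < πK s a)
    (hQ : IsQ M πK Q) (hd : IsD M πK d)
    (hC : 0 < C)
    (hKL : (⨆ s : S, KLdiv (πK1 s) (πK s)) ≤ 2 * C)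
    (hAdv : 0 ≤ expPolAdv πK1 πK Q d)
    (hζdef : ζ = (1 - M.γ) ^ 3 * expPolAdv πK1 πK Q d
        / (8 * M.γ * (1 - Real.exp (-(2 * C)))))
    (hζ1 : ζ ≤ 1)
    (hmix : ∀ s a, πt s a = ζ * πK1 s a + (1 - ζ) * πK s a)
    (hdt : IsD M πt dt) :
    Jret M πt dt - Jret M πK d ≥
      (1 - M.γ) ^ 3 * (expPolAdv πK1 πK Q d) ^ 2
        / (16 * M.γ * (1 - Real.exp (-(2 * C)))) := by
  classical
  have hγ0 := M.γ_pos
  have hγ1 := M.γ_lt_one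
  have h1γ : (0:ℝ) < 1 - M.γ := by linarith
  set 𝔸 := expPolAdv πK1 πK Q d with h𝔸
  set E := 1 - Real.exp (-(2 * C)) with hE
  have hE0 : 0 < E := by
    rw [hE]
    have : Real.exp (-(2 * C)) < Real.exp 0 := Real.exp_lt_exp.2 (by linarith)
    rw [Real.exp_zero] at this
    linarith
  have hζ0 : 0 ≤ ζ := by
    rw [hζdef]
    apply div_nonneg (mul_nonneg (pow_nonneg h1γ.le 3) hAdv)
    positivity
  have hπt : IsPolicy πt := by
    constructor
    · intro s a
      rw [hmix s a]
      have h1 := hπK1.1 s a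
      have h2 := (hπKpos s a).le
      have h3 : (0:ℝ) ≤ 1 - ζ := by linarith
      positivity
    · intro s
      rw [Finset.sum_congr rfl fun a (_ : a ∈ Finset.univ) => hmix s a,
        Finset.sum_add_distrib, ← Finset.mul_sum, ← Finset.mul_sum, hπK1.2 s, hπK.2 s]
      ring
  have hKLs : ∀ s, KLdiv (πK1 s) (πK s) ≤ 2 * C := fun s =>
    le_trans (le_ciSup (f := fun s : S => KLdiv (πK1 s) (πK s))
      (Set.Finite.bddAbove (Set.finite_range _)) s) hKL
  set δ := 2 * Real.sqrt E with hδ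
  have hδ0 : 0 ≤ δ := by positivity
  have hδsq : δ ^ 2 = 4 * E := by
    rw [hδ, mul_pow, Real.sq_sqrt hE0.le]
    ring
  have hL : ∀ s, ∑ a, |πK1 s a - πK s a| ≤ δ := by
    intro s
    have hbh := bretagnolle_huber (πK1 s) (πK s) (hπK1.1 s) (hπK1.2 s) (hπKpos s) (hπK.2 s)
    have h2 : Real.exp (-(2 * C)) ≤ Real.exp (-(KLdiv (πK1 s) (πK s))) :=
      Real.exp_le_exp.2 (by linarith [hKLs s])
    have hsq : (∑ a, |πK1 s a - πK s a|) ^ 2 ≤ δ ^ 2 := by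
      rw [hδsq]; rw [hE]; linarith
    have hLnn : (0:ℝ) ≤ ∑ a, |πK1 s a - πK s a| :=
      Finset.sum_nonneg fun a _ => abs_nonneg _
    nlinarith [hsq, hLnn, hδ0]
  have hmixdiff : ∀ s a, πt s a - πK s a = ζ * (πK1 s a - πK s a) := fun s a => by
    rw [hmix s a]; ring
  have hQb := q_bound M πK Q hπK hQ
  set g := polAdv πK1 πK Q with hg
  have hgb : ∀ s, |g s| ≤ δ / (1 - M.γ) := by
    intro s
    rw [hg, polAdv]
    refine (Finset.abs_sum_le_sum_abs _ _).trans ?_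
    calc ∑ a, |(πK1 s a - πK s a) * Q s a|
        ≤ ∑ a, |πK1 s a - πK s a| * (1 / (1 - M.γ)) := by
          apply Finset.sum_le_sum
          intro a _
          rw [abs_mul]
          exact mul_le_mul_of_nonneg_left (hQb s a) (abs_nonneg _)
      _ = (∑ a, |πK1 s a - πK s a|) * (1 / (1 - M.γ)) := by rw [Finset.sum_mul]
      _ ≤ δ * (1 / (1 - M.γ)) := by
          apply mul_le_mul_of_nonneg_right (hL s)
          positivity
      _ = δ / (1 - M.γ) := by ring
  have hpadv : ∀ s, polAdv πt πK Q s = ζ * g s := by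
    intro s
    rw [hg, polAdv, polAdv, Finset.mul_sum]
    apply Finset.sum_congr rfl
    intro a _
    rw [hmixdiff s a]
    ring
  have h1 := pdl M πt πK Q dt hQ hdt
  have h2 := pdl M πK πK Q d hQ hd
  have h20 : expPolAdv πK πK Q d = 0 := by
    simp [expPolAdv, polAdv]
  have hJdiff : Jret M πt dt - Jret M πK d = ζ * ∑ s, dt s * g s := by
    rw [h1, h2, h20]
    have : expPolAdv πt πK Q dt = ζ * ∑ s, dt s * g s := by
      rw [expPolAdv, Finset.mul_sum]
      apply Finset.sum_congr rfl
      intro s _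
      rw [hpadv s]
      ring
    rw [this]
    ring
  have hsplit : ∑ s, dt s * g s = 𝔸 + ∑ s, (dt s - d s) * g s := by
    rw [h𝔸, expPolAdv, ← Finset.sum_add_distrib]
    apply Finset.sum_congr rfl
    intro s _
    rw [hg]
    ring
  have hdl1 : ∑ s', |dt s' - d s'| ≤ M.γ / (1 - M.γ) * (ζ * δ) := by
    apply d_l1 M πt πK dt d (ζ * δ) hπt hπK hdt hd
    intro s
    calc ∑ a, |πt s a - πK s a| = ζ * ∑ a, |πK1 s a - πK s a| := by
          rw [Finset.mul_sum]
          apply Finset.sum_congr rfl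
          intro a _
          rw [hmixdiff s a, abs_mul, abs_of_nonneg hζ0]
      _ ≤ ζ * δ := mul_le_mul_of_nonneg_left (hL s) hζ0
  have herr : |∑ s, (dt s - d s) * g s| ≤ (M.γ / (1 - M.γ) * (ζ * δ)) * (δ / (1 - M.γ)) := by
    refine (Finset.abs_sum_le_sum_abs _ _).trans ?_
    calc ∑ s, |(dt s - d s) * g s|
        ≤ ∑ s, |dt s - d s| * (δ / (1 - M.γ)) := by
          apply Finset.sum_le_sum
          intro s _
          rw [abs_mul]
          exact mul_le_mul_of_nonneg_left (hgb s) (abs_nonneg _)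
      _ = (∑ s, |dt s - d s|) * (δ / (1 - M.γ)) := by rw [Finset.sum_mul]
      _ ≤ (M.γ / (1 - M.γ) * (ζ * δ)) * (δ / (1 - M.γ)) := by
          apply mul_le_mul_of_nonneg_right hdl1
          positivity
  -- final arithmetic
  have hBeq : ζ * ((M.γ / (1 - M.γ) * (ζ * δ)) * (δ / (1 - M.γ)))
      = 4 * M.γ * E * ζ ^ 2 / (1 - M.γ) ^ 2 := by
    have hδδ : δ * δ = 4 * E := by rw [← sq]; exact hδsq
    rw [show 4 * M.γ * E * ζ ^ 2 = M.γ * (δ * δ) * ζ ^ 2 by rw [hδδ]; ring]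
    rw [div_eq_mul_inv _ ((1 - M.γ) ^ 2), ← inv_pow]
    ring
  have e1 : 4 * M.γ * E * ζ ^ 2 / (1 - M.γ) ^ 2 = ζ * (1 - M.γ) * 𝔸 / 2 := by
    rw [hζdef]
    field_simp
    ring
  have e2 : (1 - M.γ) ^ 3 * 𝔸 ^ 2 / (16 * M.γ * E) = ζ * 𝔸 / 2 := by
    rw [hζdef]
    field_simp
    ring
  have hζA : 0 ≤ ζ * 𝔸 := mul_nonneg hζ0 hAdv
  have hlow : Jret M πt dt - Jret M πK d ≥ ζ * 𝔸 - ζ * (1 - M.γ) * 𝔸 / 2 := by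
    rw [hJdiff, hsplit, mul_add]
    have h3 : ζ * ∑ s, (dt s - d s) * g s ≥ - (ζ * (1 - M.γ) * 𝔸 / 2) := by
      have h4 : ζ * |∑ s, (dt s - d s) * g s| ≤ ζ * (1 - M.γ) * 𝔸 / 2 := by
        calc ζ * |∑ s, (dt s - d s) * g s|
            ≤ ζ * ((M.γ / (1 - M.γ) * (ζ * δ)) * (δ / (1 - M.γ))) :=
              mul_le_mul_of_nonneg_left herr hζ0
          _ = ζ * (1 - M.γ) * 𝔸 / 2 := by rw [hBeq, e1]
      have h5 := neg_abs_le (∑ s, (dt s - d s) * g s)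
      nlinarith [abs_nonneg (∑ s, (dt s - d s) * g s)]
    linarith
  rw [ge_iff_le, e2]
  have : ζ * 𝔸 / 2 ≤ ζ * 𝔸 - ζ * (1 - M.γ) * 𝔸 / 2 := by nlinarith
  linarith
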